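/- For any DMC P and any M ≥ 2, the Bhattacharyya-based exponent satisfies Ẽ_{M,P} ≥ E_P(0) ≥ ((M-1)/M) · Ẽ_{M,P}, where E_P(0) = max over probability distributions q on the input alphabet of Σ_{x,x'} q(x) q(x') d_B(x, x', P). Consequently, lim_{M→∞} Ẽ_{M,P} = E_P(0). -/

import Mathlib

open Finset

private lemma aux_pair_sum {X : Type*} [Fintype X] {M : ℕ} (d : X → X → ℝ)
    (hsymm : ∀ a b, d a b = d b a) (hdiag : ∀ a, d a a = 0) (x : Fin M → X) :
    ∑ p : Fin M × Fin M, d (x p.1) (x p.2)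
      = 2 * ∑ p ∈ univ.filter (fun p : Fin M × Fin M => p.1 < p.2), d (x p.1) (x p.2) := by
  classical
  rw [← Finset.sum_filter_add_sum_filter_not univ (fun p : Fin M × Fin M => p.1 < p.2)]
  have h2 : ∑ p ∈ univ.filter (fun p : Fin M × Fin M => ¬ p.1 < p.2), d (x p.1) (x p.2)
      = ∑ p ∈ univ.filter (fun p : Fin M × Fin M => p.1 < p.2), d (x p.1) (x p.2) := by
    rw [← Finset.sum_filter_add_sum_filter_not
      (univ.filter (fun p : Fin M × Fin M => ¬ p.1 < p.2)) (fun p => p.2 < p.1)]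
    have e1 : (univ.filter (fun p : Fin M × Fin M => ¬ p.1 < p.2)).filter (fun p => p.2 < p.1)
        = univ.filter (fun p : Fin M × Fin M => p.2 < p.1) := by
      ext p; simp only [Finset.mem_filter, Finset.mem_univ, true_and]
      exact ⟨fun h => h.2, fun h => ⟨not_lt.2 h.le, h⟩⟩
    have e2 : ∑ p ∈ ((univ.filter (fun p : Fin M × Fin M => ¬ p.1 < p.2)).filter
        (fun p => ¬ p.2 < p.1)), d (x p.1) (x p.2) = 0 := by
      refine Finset.sum_eq_zero fun p hp => ?_
      simp only [Finset.mem_filter, Finset.mem_univ, true_and] at hp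
      have : p.1 = p.2 := le_antisymm (not_lt.1 hp.2) (not_lt.1 hp.1)
      rw [this, hdiag]
    have e3 : ∑ p ∈ univ.filter (fun p : Fin M × Fin M => p.2 < p.1), d (x p.1) (x p.2)
        = ∑ p ∈ univ.filter (fun p : Fin M × Fin M => p.1 < p.2), d (x p.1) (x p.2) := by
      refine Finset.sum_equiv (Equiv.prodComm (Fin M) (Fin M)) (fun p => by simp) ?_
      intro p hp; exact hsymm _ _
    rw [e1, e2, e3, add_zero]
  rw [h2]; ring

private lemma aux_fiber {X : Type*} [Fintype X] [DecidableEq X] {M : ℕ} (x : Fin M → X)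
    (h : X → ℝ) :
    ∑ m : Fin M, h (x m)
      = ∑ a : X, ((univ.filter (fun m => x m = a)).card : ℝ) * h a := by
  rw [← Finset.sum_fiberwise_of_maps_to (fun m _ => Finset.mem_univ (x m)) (fun m => h (x m))]
  refine Finset.sum_congr rfl fun a _ => ?_
  rw [Finset.sum_congr rfl (fun m hm => by rw [(Finset.mem_filter.1 hm).2]),
    Finset.sum_const, nsmul_eq_mul]

private lemma aux_weight_sum {X : Type*} [Fintype X] (q : X → ℝ) (hq1 : ∑ a, q a = 1) (M : ℕ) :
    ∑ x : Fin M → X, ∏ m, q (x m) = 1 := by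
  rw [← Fintype.prod_sum]
  simp [hq1]

private lemma aux_marg {X : Type*} [Fintype X] [DecidableEq X] (q : X → ℝ) (hq1 : ∑ a, q a = 1)
    {M : ℕ} {i j : Fin M} (hij : i ≠ j) (g : X → X → ℝ) :
    ∑ x : Fin M → X, (∏ m, q (x m)) * g (x i) (x j)
      = ∑ a, ∑ b, (q a * q b) * g a b := by
  classical
  set f : X → X → Fin M → X → ℝ := fun a b m c =>
    if m = i then (if c = a then q c else 0)
    else if m = j then (if c = b then q c else 0) else q c with hf
  have key : ∀ a b, (∑ x : Fin M → X, ∏ m, f a b m (x m)) = q a * q b := by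
    intro a b
    rw [← Fintype.prod_sum]
    have hval : ∀ m : Fin M, (∑ c, f a b m c)
        = if m = i then q a else if m = j then q b else 1 := by
      intro m
      by_cases h1 : m = i
      · simp [hf, h1]
      · by_cases h2 : m = j
        · simp [hf, h1, h2]
        · simp [hf, h1, h2, hq1]
    rw [Finset.prod_congr rfl (fun m _ => hval m)]
    rw [← Finset.prod_subset (Finset.subset_univ ({i, j} : Finset (Fin M)))
      (fun m _ hm => by
        simp only [Finset.mem_insert, Finset.mem_singleton, not_or] at hm
        simp [hm.1, hm.2])]
    rw [Finset.prod_pair hij]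
    simp [Ne.symm hij]
  have hpt : ∀ a b (x : Fin M → X), (∏ m, f a b m (x m))
      = if x i = a ∧ x j = b then (∏ m, q (x m)) else 0 := by
    intro a b x
    by_cases h1 : x i = a
    · by_cases h2 : x j = b
      · rw [if_pos ⟨h1, h2⟩]
        refine Finset.prod_congr rfl fun m _ => ?_
        by_cases hmi : m = i
        · subst hmi; simp [hf, h1]
        · by_cases hmj : m = j
          · subst hmj; simp [hf, hmi, h2]
          · simp [hf, hmi, hmj]
      · rw [if_neg (fun h => h2 h.2)]
        refine Finset.prod_eq_zero (Finset.mem_univ j) ?_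
        simp [hf, Ne.symm hij, h2]
    · rw [if_neg (fun h => h1 h.1)]
      refine Finset.prod_eq_zero (Finset.mem_univ i) ?_
      simp [hf, h1]
  calc ∑ x : Fin M → X, (∏ m, q (x m)) * g (x i) (x j)
      = ∑ x : Fin M → X, ∑ a, ∑ b, (∏ m, f a b m (x m)) * g a b := by
        refine Finset.sum_congr rfl fun x _ => ?_
        simp only [hpt, ite_mul, zero_mul]
        rw [eq_comm]
        simp [ite_and, Finset.sum_ite_eq]
    _ = ∑ a, ∑ b, (∑ x : Fin M → X, ∏ m, f a b m (x m)) * g a b := by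
        rw [Finset.sum_comm]
        refine Finset.sum_congr rfl fun a _ => ?_
        rw [Finset.sum_comm]
        refine Finset.sum_congr rfl fun b _ => ?_
        rw [← Finset.sum_mul]
    _ = ∑ a, ∑ b, (q a * q b) * g a b := by simp only [key]

/-- For any DMC `P` and `M ≥ 2`, `Ẽ_{M,P} ≥ E_P(0) ≥ ((M-1)/M) Ẽ_{M,P}`, where
`E_P(0)` is Berlekamp's zero-rate exponent; consequently `Ẽ_{M,P} → E_P(0)` as `M → ∞`. -/
theorem stmt7 {X Y : Type*} [Fintype X] [Fintype Y] [Nonempty X]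
    (P : X → Y → ℝ)
    (hP0 : ∀ x y, 0 ≤ P x y) (hP1 : ∀ x, ∑ y, P x y = 1) :
    let dB : X → X → ℝ := fun x x' => - Real.log (∑ y, Real.sqrt (P x y * P x' y))
    let Etil : ℕ → ℝ := fun M => (2 / ((M:ℝ) * ((M:ℝ) - 1))) *
      ⨆ x : Fin M → X,
        ∑ p ∈ Finset.univ.filter (fun p : Fin M × Fin M => p.1 < p.2), dB (x p.1) (x p.2)
    let E0 : ℝ := ⨆ q : {q : X → ℝ // (∀ x, 0 ≤ q x) ∧ ∑ x, q x = 1},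
      ∑ x, ∑ x', q.1 x * q.1 x' * dB x x'
    (∀ M : ℕ, 2 ≤ M → E0 ≤ Etil M ∧ (((M:ℝ) - 1) / (M:ℝ)) * Etil M ≤ E0) ∧
      Filter.Tendsto Etil Filter.atTop (nhds E0) := by
  intro dB Etil E0
  classical
  -- basic facts about dB
  have hsum_nonneg : ∀ a b : X, 0 ≤ ∑ y, Real.sqrt (P a y * P b y) :=
    fun a b => Finset.sum_nonneg fun y _ => Real.sqrt_nonneg _
  have hsum_le : ∀ a b : X, ∑ y, Real.sqrt (P a y * P b y) ≤ 1 := by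
    intro a b
    have hcs := Finset.sum_mul_sq_le_sq_mul_sq Finset.univ
      (fun y => Real.sqrt (P a y)) (fun y => Real.sqrt (P b y))
    have h1 : ∀ y, Real.sqrt (P a y) * Real.sqrt (P b y) = Real.sqrt (P a y * P b y) :=
      fun y => (Real.sqrt_mul (hP0 a y) _).symm
    have h2 : ∀ (c : X) y, Real.sqrt (P c y) ^ 2 = P c y :=
      fun c y => Real.sq_sqrt (hP0 c y)
    simp only [h1, h2, hP1, mul_one] at hcs
    nlinarith [hsum_nonneg a b]
  have hd0 : ∀ a b : X, 0 ≤ dB a b := by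
    intro a b
    simp only [dB, neg_nonneg]
    exact Real.log_nonpos (hsum_nonneg a b) (hsum_le a b)
  have hdsymm : ∀ a b : X, dB a b = dB b a := by
    intro a b
    simp only [dB]
    have h4 : (∑ y, Real.sqrt (P a y * P b y)) = ∑ y, Real.sqrt (P b y * P a y) :=
      Finset.sum_congr rfl fun y _ => by rw [mul_comm]
    rw [h4]
  have hddiag : ∀ a : X, dB a a = 0 := by
    intro a
    simp only [dB]
    have h3 : ∀ y, Real.sqrt (P a y * P a y) = P a y := fun y => by
      rw [Real.sqrt_mul_self (hP0 a y)]
    rw [Finset.sum_congr rfl fun y _ => h3 y, hP1, Real.log_one, neg_zero]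
  -- uniform upper bound on the quadratic form
  obtain ⟨C, hC⟩ : ∃ C : ℝ, ∀ a b : X, dB a b ≤ C :=
    ⟨(univ : Finset (X × X)).sup' (univ_nonempty) (fun p => dB p.1 p.2),
      fun a b => by
        exact Finset.le_sup' (fun p : X × X => dB p.1 p.2) (Finset.mem_univ (a, b))⟩
  have hQle : ∀ q : {q : X → ℝ // (∀ x, 0 ≤ q x) ∧ ∑ x, q x = 1},
      ∑ a, ∑ b, q.1 a * q.1 b * dB a b ≤ C := by
    rintro ⟨q, hq0, hq1⟩
    have step : ∑ a, ∑ b, q a * q b * dB a b ≤ ∑ a, ∑ b, q a * q b * C := by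
      refine Finset.sum_le_sum fun a _ => Finset.sum_le_sum fun b _ => ?_
      exact mul_le_mul_of_nonneg_left (hC a b) (mul_nonneg (hq0 a) (hq0 b))
    refine step.trans ?_
    have : ∑ a, ∑ b, q a * q b * C = ((∑ a, q a) * (∑ b, q b)) * C := by
      rw [Finset.sum_mul, Finset.sum_mul]
      exact Finset.sum_congr rfl fun a _ => by rw [Finset.mul_sum, Finset.sum_mul]
    rw [this, hq1, one_mul, one_mul]
  have hbdd : BddAbove (Set.range fun q : {q : X → ℝ // (∀ x, 0 ≤ q x) ∧ ∑ x, q x = 1} =>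
      ∑ x, ∑ x', q.1 x * q.1 x' * dB x x') := by
    refine ⟨C, ?_⟩
    rintro _ ⟨q, rfl⟩
    exact hQle q
  haveI hne : Nonempty {q : X → ℝ // (∀ x, 0 ≤ q x) ∧ ∑ x, q x = 1} :=
    ⟨⟨fun a => if a = Classical.arbitrary X then (1:ℝ) else 0,
      fun a => by by_cases h : a = Classical.arbitrary X <;> simp [h], by simp⟩⟩
  -- the main two-sided bound for each M ≥ 2
  have main : ∀ M : ℕ, 2 ≤ M → E0 ≤ Etil M ∧ (((M:ℝ) - 1) / (M:ℝ)) * Etil M ≤ E0 := by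
    intro M hM
    have hM0 : (0:ℝ) < (M:ℝ) := by
      have : (0:ℕ) < M := by omega
      exact_mod_cast this
    have hM1 : (0:ℝ) < (M:ℝ) - 1 := by
      have : (2:ℝ) ≤ (M:ℝ) := by exact_mod_cast hM
      linarith
    -- maximizing codebook
    obtain ⟨xh, hxh⟩ := Finite.exists_max (fun x : Fin M → X =>
      ∑ p ∈ univ.filter (fun p : Fin M × Fin M => p.1 < p.2), dB (x p.1) (x p.2))
    have hbddS : BddAbove (Set.range (fun x : Fin M → X =>
        ∑ p ∈ univ.filter (fun p : Fin M × Fin M => p.1 < p.2), dB (x p.1) (x p.2))) :=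
      (Set.finite_range _).bddAbove
    have hsup : (⨆ x : Fin M → X,
        ∑ p ∈ univ.filter (fun p : Fin M × Fin M => p.1 < p.2), dB (x p.1) (x p.2))
        = ∑ p ∈ univ.filter (fun p : Fin M × Fin M => p.1 < p.2), dB (xh p.1) (xh p.2) :=
      le_antisymm (ciSup_le hxh) (le_ciSup hbddS xh)
    set SS := ∑ p ∈ univ.filter (fun p : Fin M × Fin M => p.1 < p.2), dB (xh p.1) (xh p.2)
      with hSS
    have hSSnn : 0 ≤ SS := Finset.sum_nonneg fun p _ => hd0 _ _
    have hT : ∀ x : Fin M → X, ∑ p : Fin M × Fin M, dB (x p.1) (x p.2)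
        = 2 * ∑ p ∈ univ.filter (fun p : Fin M × Fin M => p.1 < p.2), dB (x p.1) (x p.2) :=
      fun x => aux_pair_sum dB hdsymm hddiag x
    constructor
    · -- E0 ≤ Etil M
      simp only [Etil, E0]
      rw [hsup]
      refine ciSup_le fun q => ?_
      have havg : ((M:ℝ) * (M:ℝ) - (M:ℝ)) * (∑ a, ∑ b, q.1 a * q.1 b * dB a b) ≤ 2 * SS := by
        have hA2 : ∀ p : Fin M × Fin M,
            ∑ x : Fin M → X, (∏ m, q.1 (x m)) * dB (x p.1) (x p.2)
              = if p.1 = p.2 then 0 else ∑ a, ∑ b, q.1 a * q.1 b * dB a b := by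
          intro p
          by_cases hp : p.1 = p.2
          · rw [if_pos hp]
            refine Finset.sum_eq_zero fun x _ => ?_
            rw [show dB (x p.1) (x p.2) = 0 from by rw [← hp, hddiag], mul_zero]
          · rw [if_neg hp]
            exact aux_marg q.1 q.2.2 hp (fun a b => dB a b)
        have hA3 : ∑ p : Fin M × Fin M,
            (if p.1 = p.2 then (0:ℝ) else ∑ a, ∑ b, q.1 a * q.1 b * dB a b)
              = ((M:ℝ) * (M:ℝ) - (M:ℝ)) * (∑ a, ∑ b, q.1 a * q.1 b * dB a b) := by
          rw [Finset.sum_ite, Finset.sum_const_zero, Finset.sum_const, zero_add, nsmul_eq_mul]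
          congr 1
          have e : (univ.filter (fun p : Fin M × Fin M => ¬ p.1 = p.2))
              = (univ : Finset (Fin M)).offDiag := by
            ext p
            simp [Finset.mem_offDiag]
          rw [e, Finset.offDiag_card]
          have hle' : M ≤ M * M := Nat.le_mul_of_pos_left M (by omega)
          rw [Finset.card_univ, Fintype.card_fin, Nat.cast_sub hle', Nat.cast_mul]
        have hA1 : ∑ p : Fin M × Fin M, ∑ x : Fin M → X, (∏ m, q.1 (x m)) * dB (x p.1) (x p.2)
            = ∑ x : Fin M → X, (∏ m, q.1 (x m)) * (∑ p : Fin M × Fin M, dB (x p.1) (x p.2)) := by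
          rw [Finset.sum_comm]
          refine Finset.sum_congr rfl fun x _ => ?_
          rw [Finset.mul_sum]
        have hA4 : ∑ x : Fin M → X, (∏ m, q.1 (x m)) * (∑ p : Fin M × Fin M, dB (x p.1) (x p.2))
            ≤ 2 * SS := by
          have step : ∀ x : Fin M → X,
              (∏ m, q.1 (x m)) * (∑ p : Fin M × Fin M, dB (x p.1) (x p.2))
                ≤ (∏ m, q.1 (x m)) * (2 * SS) := by
            intro x
            refine mul_le_mul_of_nonneg_left ?_ (Finset.prod_nonneg fun m _ => q.2.1 _)
            rw [hT x]
            have := hxh x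
            linarith
          calc ∑ x : Fin M → X, (∏ m, q.1 (x m)) * (∑ p : Fin M × Fin M, dB (x p.1) (x p.2))
              ≤ ∑ x : Fin M → X, (∏ m, q.1 (x m)) * (2 * SS) :=
                Finset.sum_le_sum fun x _ => step x
            _ = (∑ x : Fin M → X, ∏ m, q.1 (x m)) * (2 * SS) := by rw [← Finset.sum_mul]
            _ = 2 * SS := by rw [aux_weight_sum q.1 q.2.2 M, one_mul]
        calc ((M:ℝ) * (M:ℝ) - (M:ℝ)) * (∑ a, ∑ b, q.1 a * q.1 b * dB a b)
            = ∑ p : Fin M × Fin M,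
                (if p.1 = p.2 then (0:ℝ) else ∑ a, ∑ b, q.1 a * q.1 b * dB a b) := hA3.symm
          _ = ∑ p : Fin M × Fin M, ∑ x : Fin M → X, (∏ m, q.1 (x m)) * dB (x p.1) (x p.2) :=
              Finset.sum_congr rfl fun p _ => (hA2 p).symm
          _ = ∑ x : Fin M → X, (∏ m, q.1 (x m)) * (∑ p : Fin M × Fin M, dB (x p.1) (x p.2)) :=
              hA1
          _ ≤ 2 * SS := hA4
      have hpos : (0:ℝ) < (M:ℝ) * ((M:ℝ) - 1) := mul_pos hM0 hM1
      rw [div_mul_eq_mul_div, le_div_iff₀ hpos]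
      nlinarith [havg]
    · -- ((M-1)/M) * Etil M ≤ E0
      simp only [Etil, E0]
      rw [hsup]
      -- empirical distribution of the optimal codebook
      set c : X → ℝ := fun a => (((univ : Finset (Fin M)).filter (fun m => xh m = a)).card : ℝ)
        with hc
      have hcnn : ∀ a, 0 ≤ c a := fun a => by positivity
      have hcsum : ∑ a, c a = (M:ℝ) := by
        have h := Finset.card_eq_sum_card_fiberwise
          (f := xh) (s := (univ : Finset (Fin M))) (t := (univ : Finset X))
          (fun m _ => Finset.mem_univ _)
        simp only [hc]
        rw [← Nat.cast_sum]
        rw [← h, Finset.card_univ, Fintype.card_fin]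
      have hqe0 : ∀ a, 0 ≤ c a / (M:ℝ) := fun a => div_nonneg (hcnn a) hM0.le
      have hqe1 : ∑ a, c a / (M:ℝ) = 1 := by
        rw [← Finset.sum_div, hcsum, div_self (ne_of_gt hM0)]
      have hR : ∑ a, ∑ b, c a * (c b * dB a b) = 2 * SS := by
        have h2 : ∀ a, ∑ m' : Fin M, dB a (xh m') = ∑ b, c b * dB a b := fun a =>
          aux_fiber xh (fun b => dB a b)
        have h1 : ∑ m : Fin M, ∑ m' : Fin M, dB (xh m) (xh m')
            = ∑ a, c a * (∑ m' : Fin M, dB a (xh m')) :=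
          aux_fiber xh (fun a => ∑ m' : Fin M, dB a (xh m'))
        have h3 : ∑ p : Fin M × Fin M, dB (xh p.1) (xh p.2)
            = ∑ m : Fin M, ∑ m' : Fin M, dB (xh m) (xh m') := Fintype.sum_prod_type _
        calc ∑ a, ∑ b, c a * (c b * dB a b)
            = ∑ a, c a * (∑ b, c b * dB a b) := by
              refine Finset.sum_congr rfl fun a _ => ?_
              rw [Finset.mul_sum]
          _ = ∑ a, c a * (∑ m' : Fin M, dB a (xh m')) := by
              refine Finset.sum_congr rfl fun a _ => ?_
              rw [h2]
          _ = ∑ m : Fin M, ∑ m' : Fin M, dB (xh m) (xh m') := h1.symm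
          _ = ∑ p : Fin M × Fin M, dB (xh p.1) (xh p.2) := h3.symm
          _ = 2 * SS := by rw [hT xh, ← hSS]
      have hQe : ∑ a, ∑ b, (c a / (M:ℝ)) * (c b / (M:ℝ)) * dB a b
          = (2 * SS) / ((M:ℝ) * (M:ℝ)) := by
        rw [← hR, eq_div_iff (ne_of_gt (mul_pos hM0 hM0)), Finset.sum_mul]
        refine Finset.sum_congr rfl fun a _ => ?_
        rw [Finset.sum_mul]
        refine Finset.sum_congr rfl fun b _ => ?_
        field_simp
      have hle := le_ciSup hbdd
        (⟨fun a => c a / (M:ℝ), hqe0, hqe1⟩ :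
          {q : X → ℝ // (∀ x, 0 ≤ q x) ∧ ∑ x, q x = 1})
      have heq : ((M:ℝ) - 1) / (M:ℝ) * (2 / ((M:ℝ) * ((M:ℝ) - 1)) * SS)
          = (2 * SS) / ((M:ℝ) * (M:ℝ)) := by
        field_simp
      rw [heq, ← hQe]
      exact hle
  refine ⟨main, ?_⟩
  -- the limit
  have hE0nn : 0 ≤ E0 := by
    have hq : ∀ a : X, (0:ℝ) ≤ if a = Classical.arbitrary X then (1:ℝ) else 0 := by
      intro a; split <;> norm_num
    have hle := le_ciSup hbdd
      (⟨fun a => if a = Classical.arbitrary X then (1:ℝ) else 0, hq, by simp⟩ :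
        {q : X → ℝ // (∀ x, 0 ≤ q x) ∧ ∑ x, q x = 1})
    refine le_trans ?_ hle
    refine Finset.sum_nonneg fun a _ => Finset.sum_nonneg fun b _ => ?_
    exact mul_nonneg (mul_nonneg (hq a) (hq b)) (hd0 a b)
  have hupper : Filter.Tendsto (fun M : ℕ => (1 + ((M:ℝ) - 1)⁻¹) * E0)
      Filter.atTop (nhds E0) := by
    have h1 : Filter.Tendsto (fun M : ℕ => ((M:ℝ) - 1)) Filter.atTop Filter.atTop := by
      have := Filter.tendsto_atTop_add_const_right Filter.atTop (-1 : ℝ)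
        tendsto_natCast_atTop_atTop (α := ℕ)
      simpa [sub_eq_add_neg] using this
    have h2 : Filter.Tendsto (fun M : ℕ => ((M:ℝ) - 1)⁻¹) Filter.atTop (nhds 0) :=
      h1.inv_tendsto_atTop
    have h3 : Filter.Tendsto (fun M : ℕ => 1 + ((M:ℝ) - 1)⁻¹) Filter.atTop (nhds 1) := by
      simpa using (tendsto_const_nhds (x := (1:ℝ)) (f := Filter.atTop (α := ℕ))).add h2
    simpa using h3.mul_const E0
  refine tendsto_of_tendsto_of_tendsto_of_le_of_le' tendsto_const_nhds hupper ?_ ?_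
  · exact Filter.eventually_atTop.2 ⟨2, fun M hM => (main M hM).1⟩
  · refine Filter.eventually_atTop.2 ⟨2, fun M hM => ?_⟩
    have h := (main M hM).2
    have hM0 : (0:ℝ) < (M:ℝ) := by
      have : (0:ℕ) < M := by omega
      exact_mod_cast this
    have hM1 : (0:ℝ) < (M:ℝ) - 1 := by
      have : (2:ℝ) ≤ (M:ℝ) := by exact_mod_cast hM
      linarith
    calc Etil M = ((M:ℝ) / ((M:ℝ) - 1)) * ((((M:ℝ) - 1) / (M:ℝ)) * Etil M) := by
          field_simp
        _ ≤ ((M:ℝ) / ((M:ℝ) - 1)) * E0 :=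
          mul_le_mul_of_nonneg_left h (by positivity)
        _ = (1 + ((M:ℝ) - 1)⁻¹) * E0 := by
          congr 1
          field_simp
          ring
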